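/- arXiv:2308.15146 — 4 statements merged into one kernel-verified Lean document; each statement's English description precedes it below -/
import Mathlib

section
/- Let A ≥ 1, let a, c be nonzero integers, b an integer, and x₁, x₂ ≥ 1 real with |c| < x₂^A. Then the number of integers n with |n| ≤ x₁ such that gcd(a·n + b, c) > x₂ is O(x₁·gcd(a,c)/x₂^(1-ε) + τ(c)), where τ is the divisor function and the implied constant depends only on A and ε. -/
open scoped Classical

lemma divisor_bound_aux (δ : ℝ) (hδ : 0 < δ) :
    ∃ K : ℝ, 1 ≤ K ∧ ∀ n : ℕ, n ≠ 0 → (n.divisors.card : ℝ) ≤ K * (n : ℝ) ^ δ := by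
  set M : ℝ := max 1 (2 / (δ * Real.log 2)) with hM
  have hM1 : 1 ≤ M := le_max_left _ _
  set P : ℕ := ⌈(2:ℝ) ^ (1/δ)⌉₊ with hP
  refine ⟨M ^ P, one_le_pow₀ hM1, ?_⟩
  intro n hn
  have hcard := Nat.card_divisors hn
  have hprod : (n : ℝ) = ∏ p ∈ n.primeFactors, ((p : ℝ) ^ (n.factorization p)) := by
    conv_lhs => rw [← Nat.factorization_prod_pow_eq_self hn]
    rw [Finsupp.prod, Nat.support_factorization]
    push_cast
    rfl
  have hrpow : (n : ℝ) ^ δ = ∏ p ∈ n.primeFactors, ((p : ℝ) ^ (n.factorization p)) ^ δ := by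
    rw [hprod, ← Real.finset_prod_rpow _ _ (fun p _ => by positivity) δ]
  have key : ∀ p ∈ n.primeFactors,
      ((n.factorization p + 1 : ℕ) : ℝ) ≤
        (if p < P then M else 1) * ((p : ℝ) ^ (n.factorization p)) ^ δ := by
    intro p hp
    have hpp : p.Prime := Nat.prime_of_mem_primeFactors hp
    have hk1 : 1 ≤ n.factorization p := (Nat.Prime.factorization_pos_of_dvd hpp hn
      (Nat.dvd_of_mem_primeFactors hp))
    set k := n.factorization p
    have hp2 : (2:ℝ) ≤ p := by exact_mod_cast hpp.two_le
    have hppos : (0:ℝ) < p := by linarith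
    have heq : ((p : ℝ) ^ k) ^ δ = ((p : ℝ) ^ δ) ^ k := by
      rw [← Real.rpow_natCast (p:ℝ) k, ← Real.rpow_mul hppos.le, mul_comm,
        Real.rpow_mul hppos.le, Real.rpow_natCast]
    rw [heq]
    by_cases hsmall : p < P
    · simp only [hsmall, if_true]
      have hlog2 : (0:ℝ) < Real.log 2 := Real.log_pos (by norm_num)
      have h2d : ((2:ℝ)^δ)^k ≤ ((p:ℝ)^δ)^k :=
        pow_le_pow_left₀ (by positivity) (Real.rpow_le_rpow (by norm_num) hp2 hδ.le) k
      have h2e : ((2:ℝ)^δ)^k = Real.exp (Real.log 2 * (δ * k)) := by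
        rw [← Real.rpow_natCast ((2:ℝ)^δ) k, ← Real.rpow_mul (by norm_num),
          Real.rpow_def_of_pos (by norm_num)]
      have h3 : Real.log 2 * (δ * k) ≤ ((2:ℝ)^δ)^k := by
        rw [h2e]; linarith [Real.add_one_le_exp (Real.log 2 * (δ * k))]
      have hMge : 2 / (δ * Real.log 2) ≤ M := le_max_right _ _
      have hk1' : (1:ℝ) ≤ k := by exact_mod_cast hk1
      have heq2 : (2 / (δ * Real.log 2)) * (Real.log 2 * (δ * k)) = 2 * k := by
        field_simp
      calc ((k + 1 : ℕ) : ℝ) ≤ 2 * k := by push_cast; linarith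
        _ = (2 / (δ * Real.log 2)) * (Real.log 2 * (δ * k)) := heq2.symm
        _ ≤ M * ((p:ℝ)^δ)^k := by
            apply mul_le_mul hMge (h3.trans h2d) (by positivity) (by linarith)
    · simp only [hsmall, if_false, one_mul]
      have hPle : (2:ℝ) ^ (1/δ) ≤ p := le_trans (Nat.le_ceil _) (by exact_mod_cast not_lt.mp hsmall)
      have h2 : (2:ℝ) ≤ (p:ℝ) ^ δ := by
        have : ((2:ℝ) ^ (1/δ)) ^ δ = 2 := by
          rw [← Real.rpow_mul (by norm_num), one_div, inv_mul_cancel₀ hδ.ne', Real.rpow_one]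
        calc (2:ℝ) = ((2:ℝ) ^ (1/δ)) ^ δ := this.symm
          _ ≤ (p:ℝ) ^ δ := Real.rpow_le_rpow (by positivity) hPle hδ.le
      calc ((k + 1 : ℕ) : ℝ) ≤ (2:ℝ) ^ k := by exact_mod_cast Nat.lt_two_pow_self (n := k)
        _ ≤ ((p:ℝ) ^ δ) ^ k := pow_le_pow_left₀ (by norm_num) h2 k
  have hcprod : ∏ p ∈ n.primeFactors, (if p < P then M else (1:ℝ)) ≤ M ^ P := by
    rw [Finset.prod_ite, Finset.prod_const, Finset.prod_const, one_pow, mul_one]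
    apply pow_le_pow_right₀ hM1
    calc (n.primeFactors.filter (· < P)).card ≤ (Finset.range P).card := by
          apply Finset.card_le_card
          intro p hp
          simp only [Finset.mem_filter] at hp
          exact Finset.mem_range.mpr hp.2
      _ = P := Finset.card_range P
  calc (n.divisors.card : ℝ) = ∏ p ∈ n.primeFactors, ((n.factorization p + 1 : ℕ) : ℝ) := by
        rw [hcard]; push_cast; rfl
    _ ≤ ∏ p ∈ n.primeFactors,
          ((if p < P then M else 1) * ((p : ℝ) ^ (n.factorization p)) ^ δ) :=
        Finset.prod_le_prod (fun p _ => by positivity) key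
    _ = (∏ p ∈ n.primeFactors, (if p < P then M else (1:ℝ))) *
          (∏ p ∈ n.primeFactors, ((p : ℝ) ^ (n.factorization p)) ^ δ) :=
        Finset.prod_mul_distrib
    _ ≤ M ^ P * (n : ℝ) ^ δ := by
        rw [← hrpow]
        apply mul_le_mul_of_nonneg_right hcprod (by positivity)

lemma card_ap_bound (a b : ℤ) (ha : a ≠ 0) (d : ℤ) (hd : 0 < d) (N : ℤ) (hN : 0 ≤ N) :
    (((Finset.Icc (-N) N).filter (fun n => d ∣ a * n + b)).card : ℝ) ≤
      4 * N * (Int.gcd a d : ℝ) / (d : ℝ) + 1 := by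
  set T := (Finset.Icc (-N) N).filter (fun n => d ∣ a * n + b) with hT
  have hNr : (0:ℝ) ≤ (N:ℝ) := by exact_mod_cast hN
  have hdr : (0:ℝ) < (d:ℝ) := by exact_mod_cast hd
  have hNd : (0:ℝ) ≤ 4 * N * (Int.gcd a d : ℝ) / (d : ℝ) := by positivity
  rcases T.eq_empty_or_nonempty with hE | ⟨n₀, hn₀⟩
  · rw [hE]; simp; linarith
  · set g : ℤ := (Int.gcd a d : ℤ) with hg
    have hgN : 0 < Int.gcd a d :=
      Nat.pos_of_ne_zero (fun h => ha (Int.gcd_eq_zero_iff.mp h).1)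
    have hgpos : 0 < g := by rw [hg]; exact_mod_cast hgN
    have hgd : g ∣ d := Int.gcd_dvd_right a d
    set m : ℤ := d / g with hm
    have hmg : m * g = d := Int.ediv_mul_cancel hgd
    have hmpos : 0 < m := by nlinarith
    have hdiv : ∀ n ∈ T, m ∣ (n - n₀) := by
      intro n hn
      have h1 : d ∣ a * n + b := (Finset.mem_filter.mp hn).2
      have h2 : d ∣ a * n₀ + b := (Finset.mem_filter.mp hn₀).2
      have h3 : d ∣ a * (n - n₀) := by
        have := dvd_sub h1 h2
        simpa [mul_sub] using this
      have hga : g ∣ a := Int.gcd_dvd_left a d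
      have h4 : g * m ∣ g * (a / g * (n - n₀)) := by
        rw [show g * (a / g * (n - n₀)) = (a / g * g) * (n - n₀) by ring,
          Int.ediv_mul_cancel hga, mul_comm g m, hmg]
        exact h3
      have h5 : m ∣ a / g * (n - n₀) := (mul_dvd_mul_iff_left hgpos.ne').mp h4
      have hcop : Int.gcd m (a / g) = 1 := by
        rw [Int.gcd_comm]
        exact Int.gcd_div_gcd_div_gcd hgN
      exact Int.dvd_of_dvd_mul_left_of_gcd_one (by rwa [mul_comm] at h5) hcop
    set B : ℤ := (2 * N) / m with hB
    have hB0 : 0 ≤ B := Int.ediv_nonneg (by linarith) hmpos.le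
    have hBm : B * m ≤ 2 * N := Int.ediv_mul_le _ hmpos.ne'
    have hinj : T.card ≤ (Finset.Icc (-B) B).card := by
      apply Finset.card_le_card_of_injOn (fun n => (n - n₀) / m)
      · intro n hn
        have hmem := Finset.mem_Icc.mp (Finset.mem_filter.mp hn).1
        have hmem₀ := Finset.mem_Icc.mp (Finset.mem_filter.mp hn₀).1
        have hsub : n - n₀ ≤ 2 * N := by omega
        have hsub' : -(2 * N) ≤ n - n₀ := by omega
        rw [Finset.mem_coe, Finset.mem_Icc]
        refine ⟨?_, Int.ediv_le_ediv hmpos hsub⟩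
        have hq : (n - n₀) / m * m = n - n₀ := Int.ediv_mul_cancel (hdiv n hn)
        by_contra hcon
        push_neg at hcon
        have h0 : (n - n₀) / m ≤ -B - 1 := by omega
        have h1 : (n - n₀) / m * m ≤ (-B - 1) * m := mul_le_mul_of_nonneg_right h0 hmpos.le
        rw [hq] at h1
        have heq : (-B - 1) * m = -((B + 1) * m) := by ring
        have h2 : (B + 1) * m ≤ 2 * N := by rw [heq] at h1; linarith
        have h3 : B + 1 ≤ B := (Int.le_ediv_iff_mul_le hmpos).mpr h2
        omega
      · intro n hn n' hn' h
        have h' : (n - n₀) / m = (n' - n₀) / m := h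
        have h1 := Int.ediv_mul_cancel (hdiv n hn)
        have h2 := Int.ediv_mul_cancel (hdiv n' hn')
        have : n - n₀ = n' - n₀ := by rw [← h1, h', h2]
        omega
    have hcardIcc : ((Finset.Icc (-B) B).card : ℝ) = 2 * B + 1 := by
      have htn : ((2 * B + 1).toNat : ℤ) = 2 * B + 1 := Int.toNat_of_nonneg (by omega)
      rw [Int.card_Icc, show B + 1 - -B = 2 * B + 1 from by ring]
      exact_mod_cast htn
    have hgr : (0:ℝ) < (g:ℝ) := by exact_mod_cast hgpos
    have hBreal : (B : ℝ) ≤ 2 * N * (Int.gcd a d : ℝ) / (d : ℝ) := by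
      rw [le_div_iff₀ hdr]
      have h2 : (m:ℝ) * (g:ℝ) = (d:ℝ) := by exact_mod_cast hmg
      have h1 : (B:ℝ) * (m:ℝ) ≤ 2 * (N:ℝ) := by exact_mod_cast hBm
      have hgg : ((Int.gcd a d : ℕ) : ℝ) = (g:ℝ) := by rw [hg]; push_cast; ring
      rw [hgg]
      calc (B:ℝ) * d = (B * m) * g := by rw [← h2]; ring
        _ ≤ (2 * N) * g := by nlinarith
        _ = 2 * N * g := by ring
    calc (T.card : ℝ) ≤ ((Finset.Icc (-B) B).card : ℝ) := by exact_mod_cast hinj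
      _ = 2 * B + 1 := hcardIcc
      _ ≤ 4 * N * (Int.gcd a d : ℝ) / (d : ℝ) + 1 := by
          have h4 : 4 * N * (Int.gcd a d : ℝ) / (d : ℝ)
              = 2 * (2 * N * (Int.gcd a d : ℝ) / (d : ℝ)) := by ring
          rw [h4]; linarith

theorem count_large_gcd_main (A ε : ℝ) (hA : 1 ≤ A) (hε : 0 < ε)
    (K : ℝ) (hK1 : 1 ≤ K)
    (hKb : ∀ n : ℕ, n ≠ 0 → (n.divisors.card : ℝ) ≤ K * (n : ℝ) ^ (ε / A))
    (card_ap_bound : ∀ (a b : ℤ), a ≠ 0 → ∀ (d : ℤ), 0 < d → ∀ (N : ℤ), 0 ≤ N →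
      (((Finset.Icc (-N) N).filter (fun n => d ∣ a * n + b)).card : ℝ) ≤
        4 * N * (Int.gcd a d : ℝ) / (d : ℝ) + 1) :
    ∀ a b c : ℤ, a ≠ 0 → c ≠ 0 → ∀ x₁ x₂ : ℝ, 1 ≤ x₁ → 1 ≤ x₂ →
      (|c| : ℝ) < x₂ ^ A →
      (((Finset.Icc (-⌊x₁⌋) ⌊x₁⌋).filter
          (fun n : ℤ => x₂ < ((a * n + b).gcd c : ℝ))).card : ℝ)
        ≤ (4 * K) * (x₁ * (a.gcd c : ℝ) / x₂ ^ (1 - ε) + (c.natAbs.divisors.card : ℝ)) := by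
  intro a b c ha hc x₁ x₂ hx₁ hx₂ hcx
  set N : ℤ := ⌊x₁⌋ with hN
  have hN1 : 1 ≤ N := by exact_mod_cast Int.le_floor.mpr (by simpa using hx₁)
  have hNx : (N : ℝ) ≤ x₁ := Int.floor_le x₁
  have hx₂0 : (0:ℝ) < x₂ := lt_of_lt_of_le one_pos hx₂
  have hcnat : c.natAbs ≠ 0 := Int.natAbs_ne_zero.mpr hc
  set τ : ℝ := (c.natAbs.divisors.card : ℝ) with hτ
  set gac : ℝ := (a.gcd c : ℝ) with hgac
  have hgacpos : (0:ℝ) < gac := by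
    rw [hgac]
    exact_mod_cast Nat.pos_of_ne_zero (fun h => ha (Int.gcd_eq_zero_iff.mp h).1)
  set D := c.natAbs.divisors.filter (fun d : ℕ => x₂ < (d:ℝ)) with hD
  set S := (Finset.Icc (-N) N).filter (fun n : ℤ => x₂ < ((a * n + b).gcd c : ℝ)) with hS
  have hsub : S ⊆ D.biUnion (fun d => (Finset.Icc (-N) N).filter (fun n => (d:ℤ) ∣ a * n + b)) := by
    intro n hn
    rw [Finset.mem_filter] at hn
    rw [Finset.mem_biUnion]
    refine ⟨(a * n + b).gcd c, ?_, ?_⟩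
    · rw [hD, Finset.mem_filter, Nat.mem_divisors]
      exact ⟨⟨Nat.gcd_dvd_right _ _, hcnat⟩, hn.2⟩
    · rw [Finset.mem_filter]
      exact ⟨hn.1, Int.gcd_dvd_left _ _⟩
  have hcount : (S.card : ℝ) ≤ ∑ d ∈ D,
      (((Finset.Icc (-N) N).filter (fun n => (d:ℤ) ∣ a * n + b)).card : ℝ) := by
    have h1 : S.card ≤ ∑ d ∈ D, ((Finset.Icc (-N) N).filter (fun n => (d:ℤ) ∣ a * n + b)).card :=
      le_trans (Finset.card_le_card hsub) (Finset.card_biUnion_le)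
    exact_mod_cast h1
  have hterm : ∀ d ∈ D,
      (((Finset.Icc (-N) N).filter (fun n => (d:ℤ) ∣ a * n + b)).card : ℝ) ≤
        4 * x₁ * gac / x₂ + 1 := by
    intro d hd
    rw [hD, Finset.mem_filter, Nat.mem_divisors] at hd
    have hdx : x₂ < (d:ℝ) := hd.2
    have hdpos : (0:ℤ) < (d:ℤ) := by exact_mod_cast Nat.pos_of_ne_zero (fun h => by
      rw [h] at hdx; push_cast at hdx; linarith)
    refine le_trans (card_ap_bound a b ha d hdpos N (by omega)) ?_
    have hgadle : (Int.gcd a (d:ℤ) : ℝ) ≤ gac := by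
      rw [hgac]
      have hdvd : Int.gcd a (d:ℤ) ∣ Int.gcd a c := by
        have h1 : Int.gcd a (d:ℤ) = Nat.gcd a.natAbs d := by
          unfold Int.gcd; simp
        have h2 : Nat.gcd a.natAbs d ∣ Nat.gcd a.natAbs c.natAbs :=
          Nat.gcd_dvd_gcd_of_dvd_right _ hd.1.1
        rw [h1]; exact h2
      exact_mod_cast Nat.le_of_dvd (Nat.pos_of_ne_zero
        (fun h => ha (Int.gcd_eq_zero_iff.mp h).1)) hdvd
    have hnum : 4 * (N:ℝ) * (Int.gcd a (d:ℤ) : ℝ) ≤ 4 * x₁ * gac := by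
      have hN0 : (0:ℝ) ≤ (N:ℝ) := by exact_mod_cast (by omega : (0:ℤ) ≤ N)
      have hg0 : (0:ℝ) ≤ (Int.gcd a (d:ℤ) : ℝ) := by positivity
      nlinarith
    have := div_le_div₀ (by positivity) hnum hx₂0 hdx.le
    have hcast : (((d:ℤ)):ℝ) = (d:ℝ) := by push_cast; ring
    rw [hcast]
    linarith
  have hsum : ∑ d ∈ D, (((Finset.Icc (-N) N).filter (fun n => (d:ℤ) ∣ a * n + b)).card : ℝ)
      ≤ (D.card : ℝ) * (4 * x₁ * gac / x₂ + 1) := by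
    calc ∑ d ∈ D, (((Finset.Icc (-N) N).filter (fun n => (d:ℤ) ∣ a * n + b)).card : ℝ)
        ≤ ∑ _d ∈ D, (4 * x₁ * gac / x₂ + 1) := Finset.sum_le_sum hterm
      _ = (D.card : ℝ) * (4 * x₁ * gac / x₂ + 1) := by
          rw [Finset.sum_const, nsmul_eq_mul]
  have hDτ : (D.card : ℝ) ≤ τ := by
    rw [hD, hτ]
    exact_mod_cast Finset.card_filter_le _ _
  have hτK : τ ≤ K * x₂ ^ ε := by
    have h1 : τ ≤ K * (c.natAbs : ℝ) ^ (ε / A) := hKb c.natAbs hcnat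
    have hA0 : (0:ℝ) < A := lt_of_lt_of_le one_pos hA
    have h2 : ((c.natAbs : ℝ)) ^ (ε / A) ≤ (x₂ ^ A) ^ (ε / A) := by
      apply Real.rpow_le_rpow (by positivity) _ (by positivity)
      have : ((c.natAbs : ℝ)) = |(c:ℝ)| := by push_cast [Nat.cast_natAbs]; ring_nf
      rw [this]
      exact_mod_cast le_of_lt (by exact_mod_cast hcx)
    have h3 : (x₂ ^ A) ^ (ε / A) = x₂ ^ ε := by
      rw [← Real.rpow_mul hx₂0.le]
      congr 1
      field_simp
    rw [h3] at h2
    calc τ ≤ K * (c.natAbs : ℝ) ^ (ε / A) := h1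
      _ ≤ K * x₂ ^ ε := by nlinarith [Real.rpow_nonneg (by positivity : (0:ℝ) ≤ (c.natAbs:ℝ)) (ε/A)]
  have hτ0 : (0:ℝ) ≤ τ := by positivity
  have hmain : (D.card : ℝ) * (4 * x₁ * gac / x₂ + 1) ≤
      (4 * K) * (x₁ * gac / x₂ ^ (1 - ε)) + τ := by
    have hD0 : (0:ℝ) ≤ (D.card : ℝ) := by positivity
    have hq : (0:ℝ) ≤ 4 * x₁ * gac / x₂ := by positivity
    have step1 : (D.card : ℝ) * (4 * x₁ * gac / x₂ + 1) ≤ τ * (4 * x₁ * gac / x₂) + τ := by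
      nlinarith
    have step2 : τ * (4 * x₁ * gac / x₂) ≤ (K * x₂ ^ ε) * (4 * x₁ * gac / x₂) := by
      nlinarith
    have step3 : (K * x₂ ^ ε) * (4 * x₁ * gac / x₂) = (4 * K) * (x₁ * gac * (x₂ ^ ε / x₂)) := by
      ring
    have hpow : x₂ ^ (1 - ε) * x₂ ^ ε = x₂ := by
      rw [← Real.rpow_add hx₂0]; norm_num
    have hne : x₂ ^ (1 - ε) ≠ 0 := (Real.rpow_pos_of_pos hx₂0 _).ne'
    have step4 : x₂ ^ ε / x₂ = (x₂ ^ (1 - ε))⁻¹ := by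
      field_simp
      linear_combination hpow
    have step5 : (4 * K) * (x₁ * gac * (x₂ ^ ε / x₂)) = (4 * K) * (x₁ * gac / x₂ ^ (1 - ε)) := by
      rw [step4]; ring
    have step6 : τ * (4 * x₁ * gac / x₂) ≤ (4 * K) * (x₁ * gac / x₂ ^ (1 - ε)) := by
      rw [← step5, ← step3]; exact step2
    linarith [step1, step6]
  have hfinal : (4 * K) * (x₁ * gac / x₂ ^ (1 - ε)) + τ ≤
      (4 * K) * (x₁ * gac / x₂ ^ (1 - ε) + τ) := by
    have : (4 * K) * (x₁ * gac / x₂ ^ (1 - ε) + τ)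
        = (4 * K) * (x₁ * gac / x₂ ^ (1 - ε)) + (4 * K) * τ := by ring
    rw [this]
    nlinarith
  calc (S.card : ℝ) ≤ _ := hcount
    _ ≤ (D.card : ℝ) * (4 * x₁ * gac / x₂ + 1) := hsum
    _ ≤ (4 * K) * (x₁ * gac / x₂ ^ (1 - ε)) + τ := hmain
    _ ≤ (4 * K) * (x₁ * gac / x₂ ^ (1 - ε) + τ) := hfinal

/-- The number of `n` with `|n| ≤ x₁` and `gcd(a n + b, c) > x₂` is
`≪_{A,ε} x₁ gcd(a,c)/x₂^(1-ε) + τ(c)`, provided `|c| < x₂^A`. -/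
theorem count_large_gcd (A ε : ℝ) (hA : 1 ≤ A) (hε : 0 < ε) :
    ∃ C : ℝ, 0 < C ∧ ∀ a b c : ℤ, a ≠ 0 → c ≠ 0 → ∀ x₁ x₂ : ℝ, 1 ≤ x₁ → 1 ≤ x₂ →
      (|c| : ℝ) < x₂ ^ A →
      (((Finset.Icc (-⌊x₁⌋) ⌊x₁⌋).filter
          (fun n : ℤ => x₂ < ((a * n + b).gcd c : ℝ))).card : ℝ)
        ≤ C * (x₁ * (a.gcd c : ℝ) / x₂ ^ (1 - ε) + (c.natAbs.divisors.card : ℝ)) := by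
  obtain ⟨K, hK1, hKb⟩ := divisor_bound_aux (ε / A) (div_pos hε (by linarith))
  exact ⟨4 * K, by linarith, count_large_gcd_main A ε hA hε K hK1 hKb
    (fun a b ha d hd N hN => card_ap_bound a b ha d hd N hN)⟩
end

section
/- Let ε > 0, d ∈ ℕ, 0 < κ < d be fixed, x > 1, and let g ∈ ℤ[t] be a polynomial of degree at most d with g(0) ≠ 0. Define M to be the set of pairs (n₁, n₂) of positive integers with n₁, n₂ ≤ x such that: n₁, n₂ > x^(1-κ/d), |n₁ - n₂| > x^(1-κ/d), gcd(n₁, n₂) < x^(κ/d), and gcd(n₁^d, g(n₁)) < x^(κ+ε). Then the number of pairs (n₁, n₂) with 1 ≤ n₁, n₂ ≤ x that are NOT in M is O(x^(2-κ/d)). -/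
open scoped Classical

lemma keyA (d : ℕ) (g : Polynomial ℤ) (n : ℕ) :
    Int.gcd ((n:ℤ)^d) (g.eval (n:ℤ)) ∣ (g.eval 0).natAbs ^ d := by
  have h1 : Int.gcd ((n:ℤ)^d) (g.eval (n:ℤ)) = Nat.gcd (n^d) (g.eval (n:ℤ)).natAbs := by
    unfold Int.gcd
    simp [Int.natAbs_pow]
  rw [h1]
  have h2 : Nat.gcd (n^d) (g.eval (n:ℤ)).natAbs ∣ Nat.gcd n (g.eval (n:ℤ)).natAbs ^ d :=
    gcd_pow_left_dvd_pow_gcd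
  have h3 : Nat.gcd n (g.eval (n:ℤ)).natAbs ∣ (g.eval 0).natAbs := by
    have hdvd : ((Nat.gcd n (g.eval (n:ℤ)).natAbs : ℤ)) ∣ g.eval 0 := by
      have e1 : ((Nat.gcd n (g.eval (n:ℤ)).natAbs : ℤ)) ∣ (n:ℤ) := by
        exact_mod_cast Int.natCast_dvd_natCast.mpr (Nat.gcd_dvd_left _ _)
      have e2 : ((Nat.gcd n (g.eval (n:ℤ)).natAbs : ℤ)) ∣ g.eval (n:ℤ) := by
        rw [← Int.natAbs_dvd_natAbs]
        simpa using Nat.gcd_dvd_right n (g.eval (n:ℤ)).natAbs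
      have e3 : (n:ℤ) ∣ g.eval (n:ℤ) - g.eval 0 := by
        simpa using Polynomial.sub_dvd_eval_sub (n:ℤ) 0 g
      have : ((Nat.gcd n (g.eval (n:ℤ)).natAbs : ℤ)) ∣ g.eval (n:ℤ) - (g.eval (n:ℤ) - g.eval 0) :=
        dvd_sub e2 (e1.trans e3)
      simpa using this
    rw [← Int.natAbs_dvd_natAbs] at hdvd
    simpa using hdvd
  exact h2.trans (pow_dvd_pow_of_dvd h3 d)

set_option maxHeartbeats 1000000 in
/-- All but `O(x^(2-κ/d))` pairs `(n₁,n₂) ∈ [1,x]²` satisfy the "typical" conditions: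
`n₁, n₂ > x^(1-κ/d)`, `|n₁-n₂| > x^(1-κ/d)`, `gcd(n₁,n₂) < x^(κ/d)` and
`gcd(n₁^d, g(n₁)) < x^(κ+ε)`. -/
theorem typical_pairs (ε : ℝ) (hε : 0 < ε) (d : ℕ) (κ : ℝ) (hκ : 0 < κ) (hκd : κ < d)
    (g : Polynomial ℤ) (hdeg : g.natDegree ≤ d) (hg0 : g.eval 0 ≠ 0) :
    ∃ C : ℝ, 0 < C ∧ ∀ x : ℝ, 1 < x →
      (((((Finset.Icc 1 ⌊x⌋₊) ×ˢ (Finset.Icc 1 ⌊x⌋₊)).filter (fun n : ℕ × ℕ =>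
          ¬ (x ^ (1 - κ / d) < (n.1 : ℝ) ∧ x ^ (1 - κ / d) < (n.2 : ℝ) ∧
             x ^ (1 - κ / d) < |(n.1 : ℝ) - (n.2 : ℝ)| ∧
             (Nat.gcd n.1 n.2 : ℝ) < x ^ (κ / d) ∧
             (Int.gcd ((n.1 : ℤ) ^ d) (g.eval (n.1 : ℤ)) : ℝ) < x ^ (κ + ε)))).card : ℝ))
        ≤ C * x ^ (2 - κ / d) := by
  have hd0 : (0:ℝ) < d := lt_trans hκ hκd
  set G : ℕ := (g.eval 0).natAbs ^ d with hGdef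
  have hGpos : 0 < G := pow_pos (Int.natAbs_pos.mpr hg0) d
  have hGR : (0:ℝ) < (G:ℝ) := by exact_mod_cast hGpos
  set C5 : ℝ := ((G:ℝ) ^ (1/(κ+ε))) ^ (κ/d) with hC5def
  have hC5pos : 0 < C5 := by
    rw [hC5def]; positivity
  refine ⟨7 + C5, by positivity, ?_⟩
  intro x hx
  have hx0 : (0:ℝ) < x := by linarith
  set N := ⌊x⌋₊ with hN
  have hNx : (N:ℝ) ≤ x := Nat.floor_le hx0.le
  have hkd1 : κ/d < 1 := (div_lt_one hd0).mpr hκd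
  have hkd0 : 0 < κ/d := div_pos hκ hd0
  set t := x ^ (1 - κ/d) with ht
  set T := x ^ (κ/d) with hT
  have ht1 : 1 < t := Real.one_lt_rpow_iff_of_pos hx0 |>.mpr (Or.inl ⟨hx, by linarith⟩)
  have hT1 : 1 < T := Real.one_lt_rpow_iff_of_pos hx0 |>.mpr (Or.inl ⟨hx, by linarith⟩)
  have ht0 : 0 < t := by linarith
  have hT0 : 0 < T := by linarith
  have hpow0 : (0:ℝ) < x ^ (2 - κ/d) := Real.rpow_pos_of_pos hx0 _
  set S := (Finset.Icc 1 N) ×ˢ (Finset.Icc 1 N) with hS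
  set B1 := S.filter (fun n : ℕ × ℕ => ¬ t < (n.1:ℝ)) with hB1
  set B2 := S.filter (fun n : ℕ × ℕ => ¬ t < (n.2:ℝ)) with hB2
  set B3 := S.filter (fun n : ℕ × ℕ => ¬ t < |(n.1:ℝ) - (n.2:ℝ)|) with hB3
  set B4 := S.filter (fun n : ℕ × ℕ => ¬ (Nat.gcd n.1 n.2 : ℝ) < T) with hB4
  set B5 := S.filter (fun n : ℕ × ℕ =>
      ¬ (Int.gcd ((n.1 : ℤ) ^ d) (g.eval (n.1 : ℤ)) : ℝ) < x ^ (κ + ε)) with hB5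
  have hsub : S.filter (fun n : ℕ × ℕ =>
          ¬ (t < (n.1 : ℝ) ∧ t < (n.2 : ℝ) ∧
             t < |(n.1 : ℝ) - (n.2 : ℝ)| ∧
             (Nat.gcd n.1 n.2 : ℝ) < T ∧
             (Int.gcd ((n.1 : ℤ) ^ d) (g.eval (n.1 : ℤ)) : ℝ) < x ^ (κ + ε)))
        ⊆ (B1 ∪ B2 ∪ B3 ∪ B4 ∪ B5) := by
    intro p hp
    simp only [hB1, hB2, hB3, hB4, hB5, Finset.mem_filter, Finset.mem_union] at hp ⊢
    tauto
  have hcard : ((S.filter (fun n : ℕ × ℕ =>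
          ¬ (t < (n.1 : ℝ) ∧ t < (n.2 : ℝ) ∧
             t < |(n.1 : ℝ) - (n.2 : ℝ)| ∧
             (Nat.gcd n.1 n.2 : ℝ) < T ∧
             (Int.gcd ((n.1 : ℤ) ^ d) (g.eval (n.1 : ℤ)) : ℝ) < x ^ (κ + ε)))).card : ℝ)
        ≤ (B1.card : ℝ) + B2.card + B3.card + B4.card + B5.card := by
    have h := Finset.card_le_card hsub
    have h2 := (Finset.card_union_le (B1 ∪ B2 ∪ B3 ∪ B4) B5)
    have h3 := (Finset.card_union_le (B1 ∪ B2 ∪ B3) B4)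
    have h4 := (Finset.card_union_le (B1 ∪ B2) B3)
    have h5 := (Finset.card_union_le B1 B2)
    exact_mod_cast le_trans h (by omega)
  have hmul : t * x = x ^ (2 - κ/d) := by
    rw [ht, show (2 - κ/(d:ℝ)) = (1 - κ/(d:ℝ)) + 1 by ring, Real.rpow_add hx0, Real.rpow_one]
  have hA : ((Finset.Icc 1 N).filter (fun a : ℕ => ¬ t < (a:ℝ))).card ≤ ⌊t⌋₊ := by
    have hsubA : ((Finset.Icc 1 N).filter (fun a : ℕ => ¬ t < (a:ℝ))) ⊆ Finset.Icc 1 ⌊t⌋₊ := by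
      intro a ha
      simp only [Finset.mem_filter, Finset.mem_Icc, not_lt] at ha
      exact Finset.mem_Icc.mpr ⟨ha.1.1, Nat.le_floor ha.2⟩
    refine le_trans (Finset.card_le_card hsubA) ?_
    simp [Nat.card_Icc]
  have hb1 : (B1.card : ℝ) ≤ x ^ (2 - κ/d) := by
    have hsub1 : B1 ⊆ ((Finset.Icc 1 N).filter (fun a : ℕ => ¬ t < (a:ℝ))) ×ˢ (Finset.Icc 1 N) := by
      intro p hp
      simp only [hB1, hS, Finset.mem_filter, Finset.mem_product] at hp ⊢
      tauto
    have h1 := Finset.card_le_card hsub1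
    rw [Finset.card_product] at h1
    simp only [Nat.card_Icc, Nat.add_sub_cancel] at h1
    have h2 : B1.card ≤ ⌊t⌋₊ * N := le_trans h1 (Nat.mul_le_mul_right _ hA)
    calc (B1.card:ℝ) ≤ (⌊t⌋₊ : ℝ) * N := by exact_mod_cast h2
      _ ≤ t * x := mul_le_mul (Nat.floor_le ht0.le) hNx (Nat.cast_nonneg _) ht0.le
      _ = x ^ (2 - κ/d) := hmul
  have hb2 : (B2.card : ℝ) ≤ x ^ (2 - κ/d) := by
    have hsub2 : B2 ⊆ (Finset.Icc 1 N) ×ˢ ((Finset.Icc 1 N).filter (fun a : ℕ => ¬ t < (a:ℝ))) := by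
      intro p hp
      simp only [hB2, hS, Finset.mem_filter, Finset.mem_product] at hp ⊢
      tauto
    have h1 := Finset.card_le_card hsub2
    rw [Finset.card_product] at h1
    simp only [Nat.card_Icc, Nat.add_sub_cancel] at h1
    have h2 : B2.card ≤ N * ⌊t⌋₊ := le_trans h1 (Nat.mul_le_mul_left _ hA)
    calc (B2.card:ℝ) ≤ (N : ℝ) * ⌊t⌋₊ := by exact_mod_cast h2
      _ ≤ x * t := mul_le_mul hNx (Nat.floor_le ht0.le) (Nat.cast_nonneg _) hx0.le
      _ = t * x := by ring
      _ = x ^ (2 - κ/d) := hmul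
  have hb3 : (B3.card : ℝ) ≤ 3 * x ^ (2 - κ/d) := by
    set k := ⌊t⌋₊ with hk
    have hfib : ∀ a ∈ B3.image Prod.fst, (B3.filter (fun p => p.1 = a)).card ≤ 2*k+1 := by
      intro a _
      have hinj : (B3.filter (fun p => p.1 = a)).card ≤ (Finset.Icc (a - k) (a + k)).card := by
        apply Finset.card_le_card_of_injOn Prod.snd
        · intro p hp
          have hp1 := Finset.mem_filter.mp hp
          have ha := hp1.2
          have hp2 := Finset.mem_filter.mp hp1.1
          have habs : |(p.1:ℝ) - p.2| ≤ t := not_lt.mp hp2.2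
          have hub : (p.2:ℝ) ≤ p.1 + t := by
            have h := abs_le.mp habs; linarith [h.1]
          have hlb : (p.1:ℝ) ≤ p.2 + t := by
            have h := abs_le.mp habs; linarith [h.2]
          have hfl := Nat.lt_floor_add_one t
          have hub0 : (p.2:ℝ) < ((p.1 + k + 1 : ℕ) : ℝ) := by push_cast; linarith
          have hub' : p.2 < p.1 + k + 1 := by exact_mod_cast hub0
          have hlb0 : (p.1:ℝ) < ((p.2 + k + 1 : ℕ) : ℝ) := by push_cast; linarith
          have hlb' : p.1 < p.2 + k + 1 := by exact_mod_cast hlb0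
          simp only [Finset.coe_Icc, Set.mem_Icc, Finset.mem_coe, Finset.mem_Icc]
          omega
        · intro p hp q hq hpq
          have h1 := (Finset.mem_filter.mp hp).2
          have h2 := (Finset.mem_filter.mp hq).2
          exact Prod.ext (h1.trans h2.symm) hpq
      refine le_trans hinj ?_
      rw [Nat.card_Icc]
      omega
    have himg : (B3.image Prod.fst) ⊆ Finset.Icc 1 N := by
      intro a ha
      obtain ⟨p, hp, rfl⟩ := Finset.mem_image.mp ha
      have hp2 := Finset.mem_filter.mp hp
      exact (Finset.mem_product.mp hp2.1).1
    have h := Finset.card_le_mul_card_image B3 (2*k+1) hfib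
    have himc : (B3.image Prod.fst).card ≤ N :=
      le_trans (Finset.card_le_card himg) (by simp [Nat.card_Icc])
    have hnat : B3.card ≤ (2*k+1) * N := le_trans h (Nat.mul_le_mul_left _ himc)
    have hkt : (k:ℝ) ≤ t := Nat.floor_le ht0.le
    calc (B3.card:ℝ) ≤ ((2*k+1 : ℕ) : ℝ) * (N:ℝ) := by exact_mod_cast hnat
      _ ≤ (3*t) * x := by
          apply mul_le_mul _ hNx (Nat.cast_nonneg _) (by positivity)
          push_cast; linarith
      _ = 3 * (t * x) := by ring
      _ = 3 * x ^ (2 - κ/d) := by rw [hmul]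
  have hb4 : (B4.card : ℝ) ≤ 2 * x ^ (2 - κ/d) := by
    set M := ⌈T⌉₊ with hM
    have hM2 : 2 ≤ M := by
      have h1 : (1:ℕ) < M := Nat.lt_ceil.mpr (by exact_mod_cast hT1)
      omega
    have hMT : T ≤ (M:ℝ) := Nat.le_ceil T
    set D : ℕ → Finset ℕ := fun m => (Finset.Icc 1 N).filter (fun a => m ∣ a) with hD
    have hsub4 : B4 ⊆ (Finset.Icc M N).biUnion (fun m => (D m) ×ˢ (D m)) := by
      intro p hp
      have hp1 := Finset.mem_filter.mp hp
      have hT' : T ≤ (Nat.gcd p.1 p.2 : ℝ) := not_lt.mp hp1.2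
      have hmem := Finset.mem_product.mp hp1.1
      have h1 := Finset.mem_Icc.mp hmem.1
      refine Finset.mem_biUnion.mpr ⟨Nat.gcd p.1 p.2, ?_, ?_⟩
      · exact Finset.mem_Icc.mpr ⟨Nat.ceil_le.mpr hT',
          le_trans (Nat.le_of_dvd (by omega) (Nat.gcd_dvd_left _ _)) h1.2⟩
      · exact Finset.mem_product.mpr
          ⟨Finset.mem_filter.mpr ⟨hmem.1, Nat.gcd_dvd_left _ _⟩,
           Finset.mem_filter.mpr ⟨hmem.2, Nat.gcd_dvd_right _ _⟩⟩
    have hDm : ∀ m, 0 < m → (D m).card ≤ N / m := by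
      intro m hm
      have h1 : (D m).card ≤ (Finset.Icc 1 (N/m)).card := by
        apply Finset.card_le_card_of_injOn (fun a => a / m)
        · intro a ha
          have h := Finset.mem_filter.mp ha
          have hIcc := Finset.mem_Icc.mp h.1
          exact Finset.mem_Icc.mpr ⟨(Nat.one_le_div_iff hm).mpr (Nat.le_of_dvd (by omega) h.2),
            Nat.div_le_div_right hIcc.2⟩
        · intro a ha b hb hab
          have h1 := (Finset.mem_filter.mp ha).2
          have h2 := (Finset.mem_filter.mp hb).2
          rw [← Nat.div_mul_cancel h1, ← Nat.div_mul_cancel h2]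
          simp only at hab
          rw [hab]
      simpa [Nat.card_Icc] using h1
    have hcard4 : B4.card ≤ ∑ m ∈ Finset.Icc M N, (N/m) * (N/m) := by
      refine le_trans (Finset.card_le_card hsub4) (le_trans Finset.card_biUnion_le ?_)
      apply Finset.sum_le_sum
      intro m hm
      have hm0 : 0 < m := by have := (Finset.mem_Icc.mp hm).1; omega
      rw [Finset.card_product]
      exact Nat.mul_le_mul (hDm m hm0) (hDm m hm0)
    have hsum : ∑ m ∈ Finset.Icc M N, ((m:ℝ)^2)⁻¹ ≤ 2 / T := by
      by_cases hc : M - 1 ≤ N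
      · have hMN : Finset.Icc M N = Finset.Ioc (M-1) N := by
          rw [← Finset.Icc_add_one_left_eq_Ioc]
          congr 1
          omega
        have hb := sum_Ioc_inv_sq_le_sub (α := ℝ) (k := M-1) (n := N) (by omega) hc
        rw [hMN]
        have hNinv : (0:ℝ) ≤ (N:ℝ)⁻¹ := by positivity
        have hb2 : ∑ i ∈ Finset.Ioc (M-1) N, ((i:ℝ)^2)⁻¹ ≤ ((M-1:ℕ):ℝ)⁻¹ := by linarith
        refine le_trans hb2 ?_
        have hcastM : ((M-1:ℕ):ℝ) = (M:ℝ) - 1 := by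
          push_cast [Nat.cast_sub (by omega : 1 ≤ M)]
          ring
        rw [hcastM, inv_eq_one_div, div_le_div_iff₀ (by
          have : (2:ℝ) ≤ M := by exact_mod_cast hM2
          linarith) hT0]
        have hM2R : (2:ℝ) ≤ M := by exact_mod_cast hM2
        nlinarith [hMT, hT0]
      · rw [Finset.Icc_eq_empty (by omega : ¬ M ≤ N)]
        simp
        positivity
    have hreal : (B4.card:ℝ) ≤ ∑ m ∈ Finset.Icc M N, (x/m)^2 := by
      calc (B4.card:ℝ) ≤ ((∑ m ∈ Finset.Icc M N, (N/m) * (N/m) : ℕ) : ℝ) := by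
            exact_mod_cast hcard4
        _ = ∑ m ∈ Finset.Icc M N, ((N/m : ℕ):ℝ) * ((N/m : ℕ):ℝ) := by push_cast; ring
        _ ≤ ∑ m ∈ Finset.Icc M N, (x/m)^2 := by
            apply Finset.sum_le_sum
            intro m hm
            have hm0 : 0 < m := by have := (Finset.mem_Icc.mp hm).1; omega
            have hm0R : (0:ℝ) < m := by exact_mod_cast hm0
            have h1 : ((N/m : ℕ):ℝ) ≤ x / m := by
              refine le_trans Nat.cast_div_le ?_
              gcongr
            rw [sq]
            exact mul_le_mul h1 h1 (Nat.cast_nonneg _) (by positivity)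
    have hfin : (B4.card:ℝ) ≤ x^(2:ℝ) * (2/T) := by
      refine le_trans hreal ?_
      have heq : ∑ m ∈ Finset.Icc M N, (x/m)^2 = x^(2:ℝ) * ∑ m ∈ Finset.Icc M N, ((m:ℝ)^2)⁻¹ := by
        rw [Finset.mul_sum]
        apply Finset.sum_congr rfl
        intro m _
        rw [div_pow, div_eq_mul_inv, ← Real.rpow_natCast x 2]
        norm_num
      rw [heq]
      exact mul_le_mul_of_nonneg_left hsum (by positivity)
    refine le_trans hfin (le_of_eq ?_)
    rw [hT, Real.rpow_sub hx0]
    ring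
  have hb5 : (B5.card : ℝ) ≤ C5 * x ^ (2 - κ/d) := by
    by_cases hc : (G:ℝ) < x ^ (κ+ε)
    · have hemp : B5 = ∅ := by
        rw [hB5]
        apply Finset.filter_false_of_mem
        intro p hp
        rw [not_not]
        have hdvd : Int.gcd ((p.1:ℤ)^d) (g.eval (p.1:ℤ)) ∣ G := keyA d g p.1
        have hle : ((Int.gcd ((p.1:ℤ)^d) (g.eval (p.1:ℤ)) : ℕ) : ℝ) ≤ (G:ℝ) := by
          exact_mod_cast Nat.le_of_dvd hGpos hdvd
        linarith
      rw [hemp]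
      simp only [Finset.card_empty, Nat.cast_zero]
      positivity
    · push_neg at hc
      have hxB : x ≤ (G:ℝ) ^ (1/(κ+ε)) := by
        have h1 : x = (x ^ (κ+ε)) ^ (1/(κ+ε)) := by
          rw [← Real.rpow_mul hx0.le, mul_one_div, div_self (by positivity : κ+ε ≠ 0),
            Real.rpow_one]
        rw [h1]
        exact Real.rpow_le_rpow (by positivity) hc (by positivity)
      have h1 : B5.card ≤ N * N := by
        refine le_trans (Finset.card_filter_le _ _) ?_
        rw [hS, Finset.card_product]
        simp [Nat.card_Icc]
      have hxx : (B5.card:ℝ) ≤ x * x :=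
        le_trans (by exact_mod_cast h1)
          (mul_le_mul hNx hNx (Nat.cast_nonneg _) hx0.le)
      have hsplit : x * x = x^(κ/d) * x^(2-κ/↑d) := by
        rw [← Real.rpow_add hx0, show κ/↑d + (2-κ/↑d) = (2:ℝ) by ring,
          show (2:ℝ) = ((2:ℕ):ℝ) by norm_num, Real.rpow_natCast]
        ring
      have hfac : x^(κ/↑d) ≤ C5 := by
        rw [hC5def]
        exact Real.rpow_le_rpow hx0.le hxB hkd0.le
      calc (B5.card:ℝ) ≤ x*x := hxx
        _ = x^(κ/↑d) * x^(2-κ/↑d) := hsplit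
        _ ≤ C5 * x^(2-κ/↑d) := mul_le_mul_of_nonneg_right hfac hpow0.le
  calc _ ≤ (B1.card : ℝ) + B2.card + B3.card + B4.card + B5.card := hcard
    _ ≤ (7 + C5) * x ^ (2 - κ/d) := by nlinarith [hb1, hb2, hb3, hb4, hb5]
end

section
/- For positive integers n₁ > n₂ and integers ℓ > k ≥ 0, one has gcd(n₁^k, n₁^(ℓ-k) - n₂^(ℓ-k)) ≤ gcd(n₁, n₂)^ℓ. -/
/-- For positive integers `n₁ > n₂` and `ℓ > k ≥ 0`,
`gcd(n₁^k, n₁^(ℓ-k) - n₂^(ℓ-k)) ≤ gcd(n₁, n₂)^ℓ`. -/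
theorem gcd_pow_sub_pow_le (n₁ n₂ k ℓ : ℕ) (hn₂ : 0 < n₂) (hn : n₂ < n₁) (hkl : k < ℓ) :
    Nat.gcd (n₁ ^ k) (n₁ ^ (ℓ - k) - n₂ ^ (ℓ - k)) ≤ Nat.gcd n₁ n₂ ^ ℓ := by
  set m := ℓ - k with hm
  have hm1 : 0 < m := by omega
  have hn₁ : 0 < n₁ := lt_trans hn₂ hn
  have hd : 0 < Nat.gcd n₁ n₂ := Nat.gcd_pos_of_pos_left _ hn₁
  have hlt : n₂ ^ m < n₁ ^ m := Nat.pow_lt_pow_left hn hm1.ne'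
  have hsub : 0 < n₁ ^ m - n₂ ^ m := by omega
  have hg : 0 < Nat.gcd (n₁ ^ k) (n₁ ^ m - n₂ ^ m) :=
    Nat.gcd_pos_of_pos_right _ hsub
  apply Nat.le_of_dvd (pow_pos hd ℓ)
  rw [← Nat.factorization_le_iff_dvd hg.ne' (pow_ne_zero _ hd.ne')]
  intro p
  by_cases hp : p.Prime
  · rw [Nat.factorization_gcd (pow_ne_zero _ hn₁.ne') hsub.ne',
      Nat.factorization_pow, Nat.factorization_pow,
      Nat.factorization_gcd hn₁.ne' hn₂.ne']
    simp only [Finsupp.inf_apply, Finsupp.smul_apply, smul_eq_mul]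
    set a := n₁.factorization p with ha
    set b := n₂.factorization p with hb
    rcases le_or_gt a b with hab | hab
    · calc min (k * a) ((n₁ ^ m - n₂ ^ m).factorization p) ≤ k * a := min_le_left _ _
        _ ≤ ℓ * min a b := by
          rw [min_eq_left hab]; exact Nat.mul_le_mul_right a hkl.le
    · have hc : (n₁ ^ m - n₂ ^ m).factorization p ≤ m * b := by
        by_contra hcon
        push_neg at hcon
        have h1 : p ^ (m * b + 1) ∣ n₁ ^ m - n₂ ^ m :=
          (Nat.Prime.pow_dvd_iff_le_factorization hp hsub.ne').mpr hcon
        have h2 : p ^ (m * b + 1) ∣ n₁ ^ m := by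
          rw [Nat.Prime.pow_dvd_iff_le_factorization hp (pow_ne_zero _ hn₁.ne'),
            Nat.factorization_pow]
          simp only [Finsupp.smul_apply, smul_eq_mul]
          calc m * b + 1 ≤ m * (b + 1) := by nlinarith
            _ ≤ m * a := Nat.mul_le_mul_left m hab
        have h3 : p ^ (m * b + 1) ∣ n₂ ^ m := by
          have := Nat.dvd_sub h2 h1
          rwa [Nat.sub_sub_self hlt.le] at this
        rw [Nat.Prime.pow_dvd_iff_le_factorization hp (pow_ne_zero _ hn₂.ne'),
          Nat.factorization_pow] at h3
        simp only [Finsupp.smul_apply, smul_eq_mul, ← hb] at h3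
        omega
      calc min (k * a) ((n₁ ^ m - n₂ ^ m).factorization p)
          ≤ (n₁ ^ m - n₂ ^ m).factorization p := min_le_right _ _
        _ ≤ m * b := hc
        _ ≤ ℓ * min a b := by
          rw [min_eq_right hab.le]; exact Nat.mul_le_mul_right b (by omega)
  · simp [Nat.factorization_eq_zero_of_not_prime _ hp]
end

section
/- Let g(n, a) = g(n) + a·n^ℓ where g ∈ ℤ[t] has degree at most d, g(0) ≠ 0, and ℓ ≥ 1. For each fixed value of a making deg g(·,a) = e ≥ 1 with nonzero leading coefficient, the discriminant of the polynomial obtained by varying the coefficient of n^k (for k < e) is a nonzero polynomial in that coefficient of degree at most 2e - 2, and hence vanishes for at most 2d - 2 values of that coefficient. Consequently, among the O(H) polynomials f(n) = a·n^k + b·n^ℓ + g(n) with |a|, |b| ≤ H for fixed b, at most O(1) fail to be square-free, so at most O(H) polynomials in the family fail to be square-free in total. -/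
open scoped Classical

open Polynomial

/-- A univariate integer polynomial is "not square-free" in the sense of being divisible by
the square of a nonconstant polynomial (equivalently, its discriminant vanishes). -/
def PolyNotSquarefree (f : Polynomial ℤ) : Prop :=
  ∃ h : Polynomial ℤ, 0 < h.natDegree ∧ h ^ 2 ∣ f

-- Step 1: root existence from non-squarefreeness
lemma root_of_notsqf (f : Polynomial ℤ) (hf : PolyNotSquarefree f) :
    ∃ z : ℂ, (f.map (Int.castRingHom ℂ)).eval z = 0 ∧
      ((f.map (Int.castRingHom ℂ)).derivative).eval z = 0 := by
  obtain ⟨p, hp, hdvd⟩ := hf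
  set P := p.map (Int.castRingHom ℂ) with hP
  have hPdeg : P.natDegree = p.natDegree :=
    natDegree_map_eq_of_injective (fun a b => by simp) p
  have hPd : 0 < P.degree := natDegree_pos_iff_degree_pos.mp (by omega)
  obtain ⟨z, hz⟩ := Complex.exists_root hPd
  have hxz : (X - C z) ∣ P := dvd_iff_isRoot.mpr hz
  have h2 : (X - C z) ^ 2 ∣ f.map (Int.castRingHom ℂ) := by
    calc (X - C z) ^ 2 ∣ P ^ 2 := pow_dvd_pow_of_dvd hxz 2
    _ ∣ f.map (Int.castRingHom ℂ) := by
        rw [hP, ← Polynomial.map_pow]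
        exact Polynomial.map_dvd _ hdvd
  obtain ⟨r, hr⟩ := h2
  refine ⟨z, ?_, ?_⟩
  · rw [hr]; simp
  · rw [hr]
    simp [derivative_mul, derivative_pow, eval_mul, eval_pow, eval_sub]

lemma key (k e : ℕ) (h : Polynomial ℤ) (he : e = h.natDegree) (h1 : 1 ≤ e) (hke : k < e)
    (h0 : h.eval 0 ≠ 0) :
    {a : ℤ | PolyNotSquarefree (C a * X ^ k + h)}.Finite ∧
    {a : ℤ | PolyNotSquarefree (C a * X ^ k + h)}.ncard ≤ e ∧
    ({a : ℤ | PolyNotSquarefree (C a * X ^ k + h)}.Nonempty → 2 ≤ e) := by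
  set S := {a : ℤ | PolyNotSquarefree (C a * X ^ k + h)} with hS
  have hh0 : h ≠ 0 := by
    intro hh; rw [hh] at he; simp at he; omega
  have hhe : h.coeff e ≠ 0 := by
    rw [he]; exact leadingCoeff_ne_zero.mpr hh0
  -- coefficient of the family at e
  have hcoe : ∀ a : ℤ, (C a * X ^ k + h).coeff e = h.coeff e := by
    intro a
    rw [coeff_add, coeff_C_mul, coeff_X_pow, if_neg (by omega)]
    ring
  have hfne : ∀ a : ℤ, (C a * X ^ k + h) ≠ 0 := by
    intro a hc
    have := hcoe a
    rw [hc] at this; simp at this; exact hhe this.symm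
  have hfdeg : ∀ a : ℤ, (C a * X ^ k + h).natDegree = e := by
    intro a
    refine le_antisymm ?_ (le_natDegree_of_ne_zero (by rw [hcoe]; exact hhe))
    refine (natDegree_add_le _ _).trans ?_
    simp only [max_le_iff]
    constructor
    · exact (natDegree_C_mul_le _ _).trans (by simp; omega)
    · omega
  -- complex side
  set hC : Polynomial ℂ := h.map (Int.castRingHom ℂ) with hhC
  have hCcoeff : ∀ n, hC.coeff n = (h.coeff n : ℂ) := fun n => by
    rw [hhC, coeff_map]; simp
  have hCdeg : hC.natDegree ≤ e := by rw [he]; exact natDegree_map_le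
  set Q : Polynomial ℂ := C (k : ℂ) * hC - X * derivative hC with hQ
  have hQcoeff : Q.coeff e ≠ 0 := by
    obtain ⟨e', rfl⟩ : ∃ e', e = e' + 1 := ⟨e - 1, by omega⟩
    rw [hQ, coeff_sub, coeff_C_mul, coeff_X_mul, coeff_derivative, hCcoeff]
    have hcne : ((h.coeff (e' + 1) : ℂ)) ≠ 0 := by exact_mod_cast hhe
    intro hc
    have hkne : (k : ℂ) ≠ ((e' : ℂ) + 1) := by
      have h2 : (k : ℂ) ≠ ((e' + 1 : ℕ) : ℂ) :=
        fun hcc => (by omega : k ≠ e' + 1) (Nat.cast_injective hcc)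
      simpa using h2
    have hzero : ((k : ℂ) - ((e' : ℂ) + 1)) * (h.coeff (e' + 1) : ℂ) = 0 := by
      linear_combination hc
    rcases mul_eq_zero.mp hzero with h' | h'
    · exact hkne (by linear_combination h')
    · exact hcne h'
  have hQne : Q ≠ 0 := fun hc => hQcoeff (by rw [hc]; simp)
  have hQdeg : Q.natDegree ≤ e := by
    refine (natDegree_sub_le _ _).trans ?_
    simp only [max_le_iff]
    constructor
    · exact (natDegree_C_mul_le _ _).trans hCdeg
    · refine (natDegree_mul_le).trans ?_
      have := natDegree_derivative_le hC
      simp only [natDegree_X]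
      omega
  -- the finite set of candidate roots
  set T : Finset ℂ := Q.roots.toFinset with hT
  have hTcard : T.card ≤ e := by
    refine (Multiset.toFinset_card_le _).trans ?_
    exact_mod_cast (Q.card_roots').trans hQdeg
  -- the choice map
  set ψ : ℤ → ℂ := fun a =>
    if hex : ∃ z : ℂ, ((C a * X ^ k + h).map (Int.castRingHom ℂ)).eval z = 0 ∧
        (((C a * X ^ k + h).map (Int.castRingHom ℂ)).derivative).eval z = 0
    then hex.choose else 0 with hψ
  have hmem : ∀ a ∈ S, ((C a * X ^ k + h).map (Int.castRingHom ℂ)).eval (ψ a) = 0 ∧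
      (((C a * X ^ k + h).map (Int.castRingHom ℂ)).derivative).eval (ψ a) = 0 := by
    intro a ha
    have hex := root_of_notsqf _ ha
    rw [hψ]; simp only [dif_pos hex]
    exact hex.choose_spec
  -- evaluation identities
  have hFeval : ∀ (a : ℤ) (z : ℂ),
      ((C a * X ^ k + h).map (Int.castRingHom ℂ)).eval z = (a : ℂ) * z ^ k + hC.eval z := by
    intro a z; simp [hhC]
  have hFdeval : ∀ (a : ℤ) (z : ℂ),
      (((C a * X ^ k + h).map (Int.castRingHom ℂ)).derivative).eval z
        = (a : ℂ) * (k : ℂ) * z ^ (k - 1) + (derivative hC).eval z := by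
    intro a z
    rw [Polynomial.map_add, Polynomial.map_mul, map_C, Polynomial.map_pow, map_X,
      derivative_add, derivative_C_mul_X_pow, eval_add, eval_mul, eval_C, eval_pow, eval_X]
    simp only [eq_intCast, hhC]
  -- ψ a is a root of Q
  have hroot : ∀ a ∈ S, ψ a ∈ T := by
    intro a ha
    obtain ⟨h1', h2'⟩ := hmem a ha
    rw [hFeval] at h1'
    rw [hFdeval] at h2'
    set z := ψ a
    rw [hT, Multiset.mem_toFinset, mem_roots hQne]
    have hkey : z * ((a : ℂ) * (k : ℂ) * z ^ (k - 1)) = (a : ℂ) * (k : ℂ) * z ^ k := by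
      rcases Nat.eq_zero_or_pos k with hk0 | hk0
      · subst hk0; simp
      · obtain ⟨k', rfl⟩ : ∃ k', k = k' + 1 := ⟨k - 1, by omega⟩
        simp only [Nat.add_sub_cancel]
        ring
    show Q.eval z = 0
    rw [hQ]
    simp only [eval_sub, eval_mul, eval_C, eval_X]
    have e1 : hC.eval z = -((a : ℂ) * z ^ k) := by linear_combination h1'
    have e2 : (derivative hC).eval z = -((a : ℂ) * (k : ℂ) * z ^ (k - 1)) := by
      linear_combination h2'
    rw [e1, e2]
    linear_combination hkey
  -- injectivity of ψ on S
  have hinj : Set.InjOn ψ S := by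
    intro a ha a' ha' hzz
    obtain ⟨ha1, -⟩ := hmem a ha
    obtain ⟨ha1', -⟩ := hmem a' ha'
    rw [hFeval] at ha1 ha1'
    rw [hzz] at ha1
    set z := ψ a' with hz
    have hsub : ((a : ℂ) - (a' : ℂ)) * z ^ k = 0 := by linear_combination ha1 - ha1'
    rcases mul_eq_zero.mp hsub with h' | h'
    · exact_mod_cast sub_eq_zero.mp h'
    · exfalso
      have hzne : z ≠ 0 := by
        intro hz0
        rcases Nat.eq_zero_or_pos k with hk0 | hk0
        · rw [hk0] at h'; simp at h'
        · rw [hz0] at ha1'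
          rw [zero_pow (by omega), mul_zero, zero_add] at ha1'
          have : hC.eval 0 = ((h.eval 0 : ℤ) : ℂ) := by
            rw [← coeff_zero_eq_eval_zero, ← coeff_zero_eq_eval_zero, hCcoeff]
          rw [this] at ha1'
          exact h0 (by exact_mod_cast ha1')
      exact hzne (pow_eq_zero_iff (by
        intro hk0
        rw [hk0] at h'; simp at h') |>.mp h')
  -- finiteness
  have himg : ψ '' S ⊆ ↑T := by
    rintro - ⟨a, ha, rfl⟩
    exact hroot a ha
  have hfin : S.Finite :=
    Set.Finite.of_finite_image ((T.finite_toSet).subset himg) hinj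
  refine ⟨hfin, ?_, ?_⟩
  · calc S.ncard = (ψ '' S).ncard := (Set.ncard_image_of_injOn hinj).symm
    _ ≤ (↑T : Set ℂ).ncard := Set.ncard_le_ncard himg (T.finite_toSet)
    _ = T.card := Set.ncard_coe_finset T
    _ ≤ e := hTcard
  · rintro ⟨a, ha⟩
    obtain ⟨p, hp, hdvd⟩ := ha
    have := Polynomial.natDegree_le_of_dvd hdvd (hfne a)
    rw [natDegree_pow, hfdeg a] at this
    omega


/-- In the family `f = a·Xᵏ + b·X^ℓ + g` with `deg g ≤ d`, `g(0) ≠ 0` and `1 ≤ ℓ`, `k < ℓ ≤ d`: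
for each fixed `b` with `e = deg(b·X^ℓ + g) ≥ 1` and `k < e`, at most `2d - 2` values of `a`
give a non-square-free polynomial (the discriminant, a nonzero polynomial of degree at most
`2e - 2` in the coefficient of `Xᵏ`, must vanish); consequently at most `O(H)` of the
polynomials with `|a|, |b| ≤ H` fail to be square-free. -/
theorem family_mostly_squarefree (d ℓ k : ℕ) (hℓ : 1 ≤ ℓ) (hkl : k < ℓ) (hld : ℓ ≤ d)
    (g : Polynomial ℤ) (hdeg : g.natDegree ≤ d) (hg0 : g.eval 0 ≠ 0) :
    (∀ b : ℤ, ∀ e : ℕ, e = (C b * X ^ ℓ + g).natDegree → 1 ≤ e → k < e →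
      {a : ℤ | PolyNotSquarefree (C a * X ^ k + C b * X ^ ℓ + g)}.Finite ∧
      Nat.card {a : ℤ | PolyNotSquarefree (C a * X ^ k + C b * X ^ ℓ + g)} ≤ 2 * d - 2) ∧
    ∃ Cst : ℝ, 0 < Cst ∧ ∀ H : ℝ, 1 ≤ H →
      ((((Finset.Icc (-⌊H⌋) ⌊H⌋) ×ˢ (Finset.Icc (-⌊H⌋) ⌊H⌋)).filter (fun p : ℤ × ℤ =>
          PolyNotSquarefree (C p.1 * X ^ k + C p.2 * X ^ ℓ + g))).card : ℝ)
        ≤ Cst * H := by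
  have part1 : ∀ b : ℤ, ∀ e : ℕ, e = (C b * X ^ ℓ + g).natDegree → 1 ≤ e → k < e →
      {a : ℤ | PolyNotSquarefree (C a * X ^ k + C b * X ^ ℓ + g)}.Finite ∧
      Nat.card {a : ℤ | PolyNotSquarefree (C a * X ^ k + C b * X ^ ℓ + g)} ≤ 2 * d - 2 := by
    intro b e he h1 hke
    have hsetq : {a : ℤ | PolyNotSquarefree (C a * X ^ k + C b * X ^ ℓ + g)}
        = {a : ℤ | PolyNotSquarefree (C a * X ^ k + (C b * X ^ ℓ + g))} := by
      simp only [add_assoc]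
    have h0 : (C b * X ^ ℓ + g).eval 0 ≠ 0 := by
      simpa [zero_pow (by omega : ℓ ≠ 0)] using hg0
    obtain ⟨hfin, hcard, hne⟩ := key k e _ he h1 hke h0
    have hed : e ≤ d := by
      have : (C b * X ^ ℓ + g).natDegree ≤ d := by
        refine (natDegree_add_le _ _).trans ?_
        simp only [max_le_iff]
        refine ⟨(natDegree_C_mul_le _ _).trans ?_, hdeg⟩
        rw [natDegree_X_pow]; omega
      omega
    rw [hsetq]
    refine ⟨hfin, ?_⟩
    rw [Nat.card_coe_set_eq]
    rcases Set.eq_empty_or_nonempty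
      {a : ℤ | PolyNotSquarefree (C a * X ^ k + (C b * X ^ ℓ + g))} with hE | hE
    · rw [hE]; simp
    · have := hne hE; omega
  refine ⟨part1, ⟨6 * (d : ℝ) + 3, by positivity, ?_⟩⟩
  intro H hH
  set N := ⌊H⌋ with hNdef
  have hN1 : 1 ≤ N := Int.le_floor.mpr (by simpa using hH)
  have hNH : (N : ℝ) ≤ H := Int.floor_le H
  set s := Finset.Icc (-N) N with hs
  set b₀ : ℤ := -(g.coeff ℓ) with hb₀
  -- inner bound for b ≠ b₀
  have hinner : ∀ b : ℤ, b ≠ b₀ →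
      (s.filter (fun a => PolyNotSquarefree (C a * X ^ k + C b * X ^ ℓ + g))).card
        ≤ 2 * d - 2 := by
    intro b hbne
    have hb : (C b * X ^ ℓ + g).coeff ℓ ≠ 0 := by
      rw [coeff_add, coeff_C_mul, coeff_X_pow, if_pos rfl, mul_one]
      intro hc; apply hbne; rw [hb₀]; omega
    have hle : ℓ ≤ (C b * X ^ ℓ + g).natDegree := le_natDegree_of_ne_zero hb
    obtain ⟨hfin, hcard⟩ := part1 b _ rfl (by omega) (by omega)
    have hsub : s.filter (fun a => PolyNotSquarefree (C a * X ^ k + C b * X ^ ℓ + g))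
        ⊆ hfin.toFinset := by
      intro a ha
      rw [Set.Finite.mem_toFinset]
      exact (Finset.mem_filter.mp ha).2
    calc (s.filter (fun a => PolyNotSquarefree (C a * X ^ k + C b * X ^ ℓ + g))).card
        ≤ hfin.toFinset.card := Finset.card_le_card hsub
      _ = Nat.card {a : ℤ | PolyNotSquarefree (C a * X ^ k + C b * X ^ ℓ + g)} := by
          rw [Nat.card_coe_set_eq, Set.ncard_eq_toFinset_card _ hfin]
      _ ≤ 2 * d - 2 := hcard
  -- split the double count
  have hsum : ((s ×ˢ s).filter (fun p : ℤ × ℤ =>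
        PolyNotSquarefree (C p.1 * X ^ k + C p.2 * X ^ ℓ + g))).card
      = ∑ b ∈ s, (s.filter (fun a =>
          PolyNotSquarefree (C a * X ^ k + C b * X ^ ℓ + g))).card := by
    rw [Finset.card_filter, Finset.sum_product, Finset.sum_comm]
    exact Finset.sum_congr rfl fun b _ => (Finset.card_filter _ _).symm
  have htot : ((s ×ˢ s).filter (fun p : ℤ × ℤ =>
        PolyNotSquarefree (C p.1 * X ^ k + C p.2 * X ^ ℓ + g))).card
      ≤ s.card + s.card * (2 * d - 2) := by
    rw [hsum]
    by_cases hb0 : b₀ ∈ s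
    · rw [← Finset.add_sum_erase s _ hb0]
      refine Nat.add_le_add (Finset.card_le_card (Finset.filter_subset _ _)) ?_
      calc ∑ b ∈ s.erase b₀, (s.filter (fun a =>
              PolyNotSquarefree (C a * X ^ k + C b * X ^ ℓ + g))).card
          ≤ ∑ _b ∈ s.erase b₀, (2 * d - 2) :=
            Finset.sum_le_sum (fun b hb => hinner b (Finset.ne_of_mem_erase hb))
        _ = (s.erase b₀).card * (2 * d - 2) := by rw [Finset.sum_const, smul_eq_mul]
        _ ≤ s.card * (2 * d - 2) :=
            Nat.mul_le_mul_right _ (Finset.card_le_card (Finset.erase_subset _ _))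
    · calc ∑ b ∈ s, (s.filter (fun a =>
              PolyNotSquarefree (C a * X ^ k + C b * X ^ ℓ + g))).card
          ≤ ∑ _b ∈ s, (2 * d - 2) :=
            Finset.sum_le_sum (fun b hb => hinner b (fun hc => hb0 (hc ▸ hb)))
        _ = s.card * (2 * d - 2) := by rw [Finset.sum_const, smul_eq_mul]
        _ ≤ s.card + s.card * (2 * d - 2) := Nat.le_add_left _ _
  -- cardinality of s
  have hscard : (s.card : ℝ) ≤ 3 * H := by
    have : s.card = (2 * N + 1).toNat := by
      rw [hs, Int.card_Icc]
      congr 1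
      omega
    rw [this]
    have h2 : ((2 * N + 1).toNat : ℤ) = 2 * N + 1 := Int.toNat_of_nonneg (by omega)
    have h3 : ((2 * N + 1).toNat : ℝ) = 2 * (N : ℝ) + 1 := by exact_mod_cast h2
    rw [h3]
    have h1N : (1 : ℝ) ≤ (N : ℝ) := by exact_mod_cast hN1
    linarith
  -- finish
  have hd1 : 1 ≤ d := by omega
  have hcast : ((s.card + s.card * (2 * d - 2) : ℕ) : ℝ)
      ≤ (s.card : ℝ) * (2 * d - 1) := by
    push_cast
    have : ((2 * d - 2 : ℕ) : ℝ) = 2 * (d : ℝ) - 2 := by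
      have : (2 : ℕ) ≤ 2 * d := by omega
      push_cast [Nat.cast_sub this]
      ring
    rw [this]
    have hd1' : (1 : ℝ) ≤ (d : ℝ) := by exact_mod_cast hd1
    have hsnn : (0 : ℝ) ≤ (s.card : ℝ) := Nat.cast_nonneg _
    nlinarith
  calc ((((s ×ˢ s).filter (fun p : ℤ × ℤ =>
        PolyNotSquarefree (C p.1 * X ^ k + C p.2 * X ^ ℓ + g))).card : ℕ) : ℝ)
      ≤ ((s.card + s.card * (2 * d - 2) : ℕ) : ℝ) := by exact_mod_cast htot
    _ ≤ (s.card : ℝ) * (2 * d - 1) := hcast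
    _ ≤ (3 * H) * (2 * d - 1) := by
        have hd1' : (1 : ℝ) ≤ (d : ℝ) := by exact_mod_cast hd1
        have : (0 : ℝ) ≤ 2 * (d : ℝ) - 1 := by linarith
        exact mul_le_mul_of_nonneg_right hscard this
    _ ≤ (6 * (d : ℝ) + 3) * H := by nlinarith
end
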